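/- As t → ∞, the derivative of t ↦ α21·d1(t) + α12·d2(t) converges to 2·α12·α21·((v2 − v1)/α)². -/

import Mathlib

/-- As `t → ∞`, the derivative of `t ↦ α21 * d1 t + α12 * d2 t` converges to
`2 * α12 * α21 * ((v2 - v1)/(α12 + α21))^2`. -/
theorem stmt_6 (v1 v2 α12 α21 : ℝ) (h12 : 0 < α12) (h21 : 0 < α21)
    (a1 a2 d1 d2 : ℝ → ℝ)
    (h1 : ∀ t : ℝ, 0 ≤ t → HasDerivAt a1 (v1 + α12 * (a2 t - a1 t)) t)
    (h2 : ∀ t : ℝ, 0 ≤ t → HasDerivAt a2 (v2 + α21 * (a1 t - a2 t)) t)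
    (h3 : ∀ t : ℝ, 0 ≤ t →
      HasDerivAt d1 (α12 * (d2 t - d1 t) + α12 * (a2 t - a1 t) ^ 2) t)
    (h4 : ∀ t : ℝ, 0 ≤ t →
      HasDerivAt d2 (α21 * (d1 t - d2 t) + α21 * (a1 t - a2 t) ^ 2) t) :
    Filter.Tendsto (deriv (fun s => α21 * d1 s + α12 * d2 s)) Filter.atTop
      (nhds (2 * α12 * α21 * ((v2 - v1) / (α12 + α21)) ^ 2)) := by
  have hαpos : 0 < α12 + α21 := by positivity
  set α : ℝ := α12 + α21 with hα
  set c : ℝ := (v2 - v1) / α with hc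
  have hcα : c * α = v2 - v1 := by
    rw [hc, div_mul_cancel₀ _ hαpos.ne']
  set g : ℝ → ℝ := fun t => (a2 t - a1 t - c) * Real.exp (α * t) with hg
  have hg' : ∀ t : ℝ, 0 ≤ t → HasDerivAt g 0 t := by
    intro t ht
    have hexp : HasDerivAt (fun s : ℝ => Real.exp (α * s)) (Real.exp (α * t) * α) t := by
      simpa using ((hasDerivAt_id t).const_mul α).exp
    have h := (((h2 t ht).sub (h1 t ht)).sub_const c).mul hexp
    refine HasDerivAt.congr_deriv (f := g) h ?_
    have : v2 + α21 * (a1 t - a2 t) - (v1 + α12 * (a2 t - a1 t))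
        = (v2 - v1) - α * (a2 t - a1 t) := by ring
    rw [this, ← hcα]
    simp only [Pi.sub_apply]
    ring
  -- g is constant on [0, ∞)
  have hgconst : ∀ t : ℝ, 0 ≤ t → g t = g 0 := by
    intro t ht
    have hcont : ContinuousOn g (Set.Icc 0 t) := fun x hx =>
      ((hg' x hx.1).continuousAt).continuousWithinAt
    have hderiv : ∀ x ∈ Set.Ico (0:ℝ) t, HasDerivWithinAt g 0 (Set.Ici x) x :=
      fun x hx => (hg' x hx.1).hasDerivWithinAt
    exact constant_of_has_deriv_right_zero hcont hderiv t ⟨ht, le_refl t⟩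
  -- a2 - a1 tends to c
  have hlim : Filter.Tendsto (fun t => a2 t - a1 t) Filter.atTop (nhds c) := by
    have hexp0 : Filter.Tendsto (fun t : ℝ => Real.exp (-(α * t))) Filter.atTop (nhds 0) := by
      have hat : Filter.Tendsto (fun t : ℝ => α * t) Filter.atTop Filter.atTop :=
        Filter.Tendsto.const_mul_atTop hαpos Filter.tendsto_id
      exact Real.tendsto_exp_neg_atTop_nhds_zero.comp hat
    have : Filter.Tendsto (fun t : ℝ => c + g 0 * Real.exp (-(α * t))) Filter.atTop
        (nhds (c + g 0 * 0)) := by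
      exact tendsto_const_nhds.add (tendsto_const_nhds.mul hexp0)
    rw [mul_zero, add_zero] at this
    apply this.congr'
    filter_upwards [Filter.eventually_ge_atTop (0:ℝ)] with t ht
    have h0 := hgconst t ht
    have hepos : Real.exp (α * t) ≠ 0 := Real.exp_ne_zero _
    have : a2 t - a1 t - c = g 0 * Real.exp (-(α * t)) := by
      rw [Real.exp_neg, ← h0]
      field_simp [hg]
      rfl
    linarith [this]
  -- the derivative is eventually 2*α12*α21*(a2-a1)^2
  have hderiv2 : ∀ t : ℝ, 0 ≤ t →
      deriv (fun s => α21 * d1 s + α12 * d2 s) t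
        = 2 * α12 * α21 * (a2 t - a1 t) ^ 2 := by
    intro t ht
    have h := ((h3 t ht).const_mul α21).add ((h4 t ht).const_mul α12)
    rw [show (fun s => α21 * d1 s + α12 * d2 s) = ((fun y => α21 * d1 y) + fun y => α12 * d2 y) from rfl, h.deriv]
    ring
  have htarget : Filter.Tendsto (fun t => 2 * α12 * α21 * (a2 t - a1 t) ^ 2)
      Filter.atTop (nhds (2 * α12 * α21 * c ^ 2)) :=
    tendsto_const_nhds.mul (hlim.pow 2)
  apply htarget.congr'
  filter_upwards [Filter.eventually_ge_atTop (0:ℝ)] with t ht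
  exact (hderiv2 t ht).symm
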